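/- Let g(λ) = r_S(λ, 0) and fₙ(λ) = (n^α/n)·r_S(λ, β) + ((n − n^α)/n)·r_S(λ, 0), where r_S(λ, b) is the risk of soft thresholding at a Gaussian mean b. If for each n, λ̂ₙ is a minimizer of fₙ, then λ̂ₙ → ∞ as n → ∞. -/

import Mathlib

open MeasureTheory ProbabilityTheory Filter
open scoped NNReal Topology

/-- Soft thresholding operator. -/
noncomputable def softThresh (y lam : ℝ) : ℝ := Real.sign y * max (|y| - lam) 0

/-- Risk of soft thresholding at a Gaussian mean `b` with noise level `σ`:
`r_S(λ, b) = E[(S(Y, λ) − b)²]` for `Y ~ N(b, σ²)`. -/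
noncomputable def softRisk (σ lam b : ℝ) : ℝ :=
  ∫ y, (softThresh y lam - b)^2 ∂(gaussianReal b ⟨σ^2, sq_nonneg σ⟩)

lemma measurable_realSign : Measurable Real.sign := by
  have h : Real.sign = fun r : ℝ => if r < 0 then (-1 : ℝ) else if 0 < r then 1 else 0 :=
    funext fun r => rfl
  rw [h]
  exact Measurable.ite (show MeasurableSet (Set.Iio (0:ℝ)) from measurableSet_Iio)
    measurable_const
    (Measurable.ite (show MeasurableSet (Set.Ioi (0:ℝ)) from measurableSet_Ioi)
      measurable_const measurable_const)

lemma measurable_softThresh (lam : ℝ) : Measurable (fun y => softThresh y lam) :=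
  measurable_realSign.mul ((measurable_abs.sub measurable_const).max measurable_const)

lemma abs_realSign_le_one (y : ℝ) : |Real.sign y| ≤ 1 := by
  rcases lt_trichotomy y 0 with h | h | h
  · rw [Real.sign_of_neg h]; norm_num
  · rw [h, Real.sign_zero]; norm_num
  · rw [Real.sign_of_pos h]; norm_num

lemma softThresh_sq_le_sq {lam : ℝ} (hl : 0 ≤ lam) (y : ℝ) :
    (softThresh y lam)^2 ≤ y^2 := by
  have h1 : (Real.sign y)^2 ≤ 1 := by
    calc (Real.sign y)^2 = |Real.sign y|^2 := (sq_abs _).symm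
      _ ≤ 1^2 := by
        exact pow_le_pow_left₀ (abs_nonneg _) (abs_realSign_le_one y) 2
      _ = 1 := one_pow 2
  have h2 : max (|y| - lam) 0 ≤ |y| := max_le (by linarith [abs_nonneg y]) (abs_nonneg y)
  calc (softThresh y lam)^2 = (Real.sign y)^2 * (max (|y| - lam) 0)^2 := by
        rw [softThresh, mul_pow]
    _ ≤ 1 * (max (|y| - lam) 0)^2 := by
        exact mul_le_mul_of_nonneg_right h1 (sq_nonneg _)
    _ = (max (|y| - lam) 0)^2 := one_mul _
    _ ≤ |y|^2 := pow_le_pow_left₀ (le_max_right _ _) h2 2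
    _ = y^2 := sq_abs y

lemma softThresh_sq_antitone {l1 l2 : ℝ} (h : l1 ≤ l2) (y : ℝ) :
    (softThresh y l2)^2 ≤ (softThresh y l1)^2 := by
  have h2 : max (|y| - l2) 0 ≤ max (|y| - l1) 0 :=
    max_le_max (by linarith) le_rfl
  calc (softThresh y l2)^2 = (Real.sign y)^2 * (max (|y| - l2) 0)^2 := by
        rw [softThresh, mul_pow]
    _ ≤ (Real.sign y)^2 * (max (|y| - l1) 0)^2 := by
        refine mul_le_mul_of_nonneg_left ?_ (sq_nonneg _)
        exact pow_le_pow_left₀ (le_max_right _ _) h2 2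
    _ = (softThresh y l1)^2 := by rw [softThresh, mul_pow]

lemma integrable_sq_gaussian {v : ℝ≥0} (hv : v ≠ 0) :
    Integrable (fun y : ℝ => y^2) (gaussianReal 0 v) := by
  rw [gaussianReal_of_var_ne_zero _ hv,
    integrable_withDensity_iff (measurable_gaussianPDF _ _)
      (Filter.Eventually.of_forall fun x => ENNReal.ofReal_lt_top)]
  have hv' : (0:ℝ) < v := NNReal.coe_pos.mpr (pos_iff_ne_zero.mpr hv)
  have hb : (0:ℝ) < (2 * (v:ℝ))⁻¹ := by positivity
  have key := (integrable_rpow_mul_exp_neg_mul_sq hb (s := 2) (by norm_num)).const_mul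
    ((Real.sqrt (2 * Real.pi * v))⁻¹)
  refine key.congr (Filter.Eventually.of_forall fun y => ?_)
  have hnn := gaussianPDFReal_nonneg 0 v y
  simp only [gaussianPDF_def]
  rw [ENNReal.toReal_ofReal hnn]
  simp only [gaussianPDFReal]
  rw [show y ^ (2:ℝ) = y ^ 2 from by rw [← Real.rpow_natCast y 2]; norm_num]
  have harg : -(y - 0)^2 / (2 * (v:ℝ)) = -(2 * (v:ℝ))⁻¹ * y^2 := by
    field_simp
    ring
  rw [harg]
  ring

lemma integrable_softThresh_sq_gaussian {v : ℝ≥0} (hv : v ≠ 0) {lam : ℝ} (hl : 0 ≤ lam) :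
    Integrable (fun y : ℝ => (softThresh y lam)^2) (gaussianReal 0 v) := by
  refine (integrable_sq_gaussian hv).mono'
    (((measurable_softThresh lam).pow_const 2).aestronglyMeasurable)
    (Filter.Eventually.of_forall fun y => ?_)
  rw [Real.norm_eq_abs, abs_of_nonneg (sq_nonneg _)]
  exact softThresh_sq_le_sq hl y

lemma softRisk_eq (σ lam : ℝ) :
    softRisk σ lam 0 = ∫ y, (softThresh y lam)^2 ∂(gaussianReal 0 ⟨σ^2, sq_nonneg σ⟩) := by
  simp only [softRisk, sub_zero]

lemma softRisk_nonneg (σ lam b : ℝ) : 0 ≤ softRisk σ lam b :=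
  integral_nonneg fun y => sq_nonneg _

lemma var_ne_zero {σ : ℝ} (hσ : 0 < σ) : (⟨σ^2, sq_nonneg σ⟩ : ℝ≥0) ≠ 0 := by
  intro h
  have : σ^2 = 0 := congrArg NNReal.toReal h
  nlinarith

lemma softRisk_zero_antitone {σ : ℝ} (hσ : 0 < σ) {l1 l2 : ℝ} (h0 : 0 ≤ l1) (h : l1 ≤ l2) :
    softRisk σ l2 0 ≤ softRisk σ l1 0 := by
  rw [softRisk_eq, softRisk_eq]
  exact integral_mono_of_nonneg (Filter.Eventually.of_forall fun y => sq_nonneg _)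
    (integrable_softThresh_sq_gaussian (var_ne_zero hσ) h0)
    (Filter.Eventually.of_forall fun y => softThresh_sq_antitone h y)

lemma softRisk_zero_pos {σ : ℝ} (hσ : 0 < σ) {M : ℝ} (hM : 0 ≤ M) :
    0 < softRisk σ M 0 := by
  rw [softRisk_eq]
  set v : ℝ≥0 := ⟨σ^2, sq_nonneg σ⟩
  have hv : v ≠ 0 := var_ne_zero hσ
  refine (integral_pos_iff_support_of_nonneg (fun y => sq_nonneg _)
    (integrable_softThresh_sq_gaussian hv hM)).mpr ?_
  have hsub : Set.Ioi M ⊆ Function.support fun y => (softThresh y M)^2 := by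
    intro y hy
    have hy' : 0 < y := lt_of_le_of_lt hM hy
    have h1 : softThresh y M = y - M := by
      rw [softThresh, Real.sign_of_pos hy', abs_of_pos hy', one_mul,
        max_eq_left (by linarith [Set.mem_Ioi.mp hy] : (0:ℝ) ≤ y - M)]
    simp only [Function.mem_support, h1]
    have : 0 < y - M := by linarith [Set.mem_Ioi.mp hy]
    positivity
  have hIoi : 0 < gaussianReal 0 v (Set.Ioi M) := by
    have hne : gaussianReal 0 v (Set.Ioi M) ≠ 0 := by
      intro h0
      have : (volume : Measure ℝ) (Set.Ioi M) = 0 :=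
        gaussianReal_absolutelyContinuous' 0 hv h0
      rw [Real.volume_Ioi] at this
      exact ENNReal.top_ne_zero this
    exact pos_iff_ne_zero.mpr hne
  exact lt_of_lt_of_le hIoi (measure_mono hsub)

lemma softRisk_zero_tendsto {σ : ℝ} (hσ : 0 < σ) :
    Tendsto (fun lam => softRisk σ lam 0) atTop (𝓝 0) := by
  set v : ℝ≥0 := ⟨σ^2, sq_nonneg σ⟩
  have hv : v ≠ 0 := var_ne_zero hσ
  have h := tendsto_integral_filter_of_dominated_convergence
    (μ := gaussianReal 0 v) (l := (atTop : Filter ℝ))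
    (F := fun lam y => (softThresh y lam)^2) (f := fun _ => (0:ℝ))
    (fun y => y^2)
    (Filter.Eventually.of_forall fun lam =>
      ((measurable_softThresh lam).pow_const 2).aestronglyMeasurable)
    (by
      filter_upwards [eventually_ge_atTop (0:ℝ)] with lam hlam
      refine Filter.Eventually.of_forall fun y => ?_
      rw [Real.norm_eq_abs, abs_of_nonneg (sq_nonneg _)]
      exact softThresh_sq_le_sq hlam y)
    (integrable_sq_gaussian hv)
    (Filter.Eventually.of_forall fun y => by
      refine Tendsto.congr' ?_ tendsto_const_nhds
      filter_upwards [eventually_ge_atTop |y|] with lam hlam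
      have : max (|y| - lam) 0 = 0 := max_eq_right (by linarith)
      simp [softThresh, this])
  simp only [integral_zero] at h
  refine h.congr fun lam => ?_
  rw [softRisk_eq]

/-- The certainty-equivalent regularisation sequence tends to infinity: if `λ̂ₙ`
minimizes `fₙ(λ) = (n^α/n) r_S(λ, β) + ((n − n^α)/n) r_S(λ, 0)` over `λ ≥ 0`,
then `λ̂ₙ → ∞`. -/
theorem certainty_equivalent_sequence_tendsto_atTop
    (β σ α : ℝ) (hσ : 0 < σ) (hα0 : 0 ≤ α) (hα1 : α < 1)
    (lamhat : ℕ → ℝ) (hmem : ∀ n, lamhat n ∈ Set.Ici (0 : ℝ))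
    (hmin : ∀ n : ℕ, IsMinOn
      (fun lam => ((n : ℝ)^α / n) * softRisk σ lam β
        + (((n : ℝ) - (n : ℝ)^α) / n) * softRisk σ lam 0)
      (Set.Ici (0 : ℝ)) (lamhat n)) :
    Tendsto lamhat atTop atTop := by
  rw [tendsto_atTop]
  intro M
  set M' : ℝ := max M 0 with hM'def
  have hM'0 : (0:ℝ) ≤ M' := le_max_right _ _
  set c : ℝ := softRisk σ M' 0 with hcdef
  have hc : 0 < c := softRisk_zero_pos hσ hM'0
  -- choose a large λ* with small null-risk
  obtain ⟨lamstar, hls0, hlslt⟩ : ∃ l : ℝ, 0 ≤ l ∧ softRisk σ l 0 < c := by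
    have := ((softRisk_zero_tendsto hσ).eventually_lt_const hc).and
      (eventually_ge_atTop (0:ℝ))
    obtain ⟨l, h1, h2⟩ := this.exists
    exact ⟨l, h2, h1⟩
  set R : ℝ := softRisk σ lamstar β with hRdef
  set G : ℝ := softRisk σ lamstar 0 with hGdef
  -- coefficient sequences
  set a : ℕ → ℝ := fun n => (n : ℝ)^α / n with hadef
  set b : ℕ → ℝ := fun n => ((n : ℝ) - (n : ℝ)^α) / n with hbdef
  have ha : Tendsto a atTop (𝓝 0) := by
    have h1 : Tendsto (fun x : ℝ => x ^ (α - 1)) atTop (𝓝 0) := by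
      have := tendsto_rpow_neg_atTop (by linarith : (0:ℝ) < 1 - α)
      simpa [neg_sub] using this
    have h2 := h1.comp (tendsto_natCast_atTop_atTop (R := ℝ))
    refine h2.congr' ?_
    filter_upwards [eventually_ge_atTop 1] with n hn
    have hn0 : (0:ℝ) < n := by exact_mod_cast Nat.lt_of_lt_of_le Nat.zero_lt_one hn
    simp only [Function.comp, hadef]
    rw [Real.rpow_sub hn0, Real.rpow_one]
  have hb1 : Tendsto b atTop (𝓝 1) := by
    have h2 : Tendsto (fun n : ℕ => 1 - a n) atTop (𝓝 (1 - 0)) :=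
      tendsto_const_nhds.sub ha
    rw [sub_zero] at h2
    refine h2.congr' ?_
    filter_upwards [eventually_ge_atTop 1] with n hn
    have hn0 : (0:ℝ) < n := by exact_mod_cast Nat.lt_of_lt_of_le Nat.zero_lt_one hn
    simp only [hadef, hbdef]
    rw [sub_div, div_self (ne_of_gt hn0)]
  have key : ∀ᶠ n : ℕ in atTop, a n * R + b n * G - b n * c < 0 := by
    have hlim : Tendsto (fun n : ℕ => a n * R + b n * G - b n * c) atTop
        (𝓝 (0 * R + 1 * G - 1 * c)) :=
      ((ha.mul_const R).add (hb1.mul_const G)).sub (hb1.mul_const c)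
    have : (0:ℝ) * R + 1 * G - 1 * c < 0 := by
      simp only [zero_mul, one_mul, zero_add]
      linarith
    exact hlim.eventually_lt_const this
  filter_upwards [key, eventually_ge_atTop 1] with n hkey hn1
  by_contra hcon
  push_neg at hcon
  have hn0 : (0:ℝ) < n := by exact_mod_cast Nat.lt_of_lt_of_le Nat.zero_lt_one hn1
  have hn1' : (1:ℝ) ≤ n := by exact_mod_cast hn1
  have ha_nonneg : 0 ≤ a n := div_nonneg (Real.rpow_nonneg (le_of_lt hn0) α) (le_of_lt hn0)
  have hb_nonneg : 0 ≤ b n := by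
    refine div_nonneg ?_ (le_of_lt hn0)
    have : (n:ℝ)^α ≤ (n:ℝ)^(1:ℝ) := Real.rpow_le_rpow_of_exponent_le hn1' (le_of_lt hα1)
    rw [Real.rpow_one] at this
    linarith
  -- lamhat n is at most M'
  have hlam_le : lamhat n ≤ M' := le_trans (le_of_lt hcon) (le_max_left _ _)
  have hlam0 : (0:ℝ) ≤ lamhat n := hmem n
  -- minimality at λ*
  have h1 : a n * softRisk σ (lamhat n) β + b n * softRisk σ (lamhat n) 0
      ≤ a n * R + b n * G :=
    isMinOn_iff.mp (hmin n) lamstar hls0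
  -- lower bound at lamhat n
  have h2 : b n * c ≤ a n * softRisk σ (lamhat n) β + b n * softRisk σ (lamhat n) 0 := by
    have hrβ : 0 ≤ a n * softRisk σ (lamhat n) β :=
      mul_nonneg ha_nonneg (softRisk_nonneg _ _ _)
    have hg : c ≤ softRisk σ (lamhat n) 0 := softRisk_zero_antitone hσ hlam0 hlam_le
    nlinarith [mul_le_mul_of_nonneg_left hg hb_nonneg]
  linarith
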